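/- Let G be a finite simple graph on n vertices and let ε > 0. Suppose there exists a set B' ⊆ V with |B'| ≤ εn such that every connected component of the subgraph of G induced on V \ B' has at most εn vertices. Then there exists a single report r : V × V → Bool such that for every vertex v ∈ V there is a corruption instance B_v ⊆ V with v ∈ B_v, |B_v| ≤ 2εn, and r consistent with B_v. Consequently, even knowing that the truthful set has size at least (1 − 2ε)n, no deterministic algorithm can identify from the reports even a single vertex that is guaranteed to be truthful. -/

import Mathlib

open scoped Classical

/-- A report `r` is consistent with corruption instance `B` if every truthful vertex
(`u ∉ B`) reports the true type of each of its neighbors. -/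
def Consistent {V : Type*} (G : SimpleGraph V) (r : V × V → Bool) (B : Finset V) : Prop :=
  ∀ u ∉ B, ∀ v, G.Adj u v → (r (u, v) = true ↔ v ∉ B)

/-- The agreement graph `H(r)`: `u, v` adjacent iff adjacent in `G` and both report
each other truthful. -/
def agreementGraph {V : Type*} (G : SimpleGraph V) (r : V × V → Bool) : SimpleGraph V where
  Adj u v := G.Adj u v ∧ r (u, v) = true ∧ r (v, u) = true
  symm := by
    constructor
    rintro u v ⟨h1, h2, h3⟩
    exact ⟨h1.symm, h3, h2⟩
  loopless := by
    constructor
    rintro u ⟨h1, -, -⟩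
    exact G.loopless.irrefl u h1

/-- `G` is a δ-good expander: (i) every set `U` with `|U| ≤ 2δn` has more than `|U|`
neighbors outside `U`; (ii) any two disjoint sets of sizes `≥ δn` and `≥ n/4` are
joined by an edge. -/
def GoodExpander {V : Type*} [Fintype V] (G : SimpleGraph V) (δ : ℝ) : Prop :=
  (∀ U : Finset V, (U.card : ℝ) ≤ 2 * δ * (Fintype.card V : ℝ) →
      U.card < (Finset.univ.filter (fun v => v ∉ U ∧ ∃ u ∈ U, G.Adj u v)).card) ∧
  (∀ A₁ A₂ : Finset V, Disjoint A₁ A₂ →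
      δ * (Fintype.card V : ℝ) ≤ (A₁.card : ℝ) →
      (Fintype.card V : ℝ) / 4 ≤ (A₂.card : ℝ) →
      ∃ a ∈ A₁, ∃ b ∈ A₂, G.Adj a b)

/-- The subgraph of `G` induced on a set `T` (kept as a graph on the same vertex set). -/
def inducedOn {V : Type*} (G : SimpleGraph V) (T : Set V) : SimpleGraph V where
  Adj u v := G.Adj u v ∧ u ∈ T ∧ v ∈ T
  symm := by
    constructor
    rintro u v ⟨h1, h2, h3⟩
    exact ⟨h1.symm, h3, h2⟩
  loopless := by
    constructor
    rintro u ⟨h1, -, -⟩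
    exact G.loopless.irrefl u h1

/-- If `G` can be split, by removing a set `B'` of at most `εn`
vertices, into connected components each of size at most `εn`, then there is a single
report `r` such that every vertex is corrupt in some corruption instance of size at most
`2εn` consistent with `r`; hence no truthful vertex can be identified. -/
theorem no_detection_without_expansion {V : Type*} [Fintype V]
    (G : SimpleGraph V) (ε : ℝ) (hε : 0 < ε)
    (B' : Finset V) (hB' : (B'.card : ℝ) ≤ ε * (Fintype.card V : ℝ))
    (hcomp : ∀ u : V, u ∉ B' →
      (({v | (inducedOn G {x | x ∉ B'}).Reachable u v}.ncard : ℕ) : ℝ) ≤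
        ε * (Fintype.card V : ℝ)) :
    ∃ r : V × V → Bool, ∀ v : V, ∃ B : Finset V,
      v ∈ B ∧ (B.card : ℝ) ≤ 2 * ε * (Fintype.card V : ℝ) ∧ Consistent G r B := by
  classical
  have hεn : (0 : ℝ) ≤ ε * (Fintype.card V : ℝ) :=
    mul_nonneg hε.le (Nat.cast_nonneg _)
  refine ⟨fun p => decide (p.2 ∉ B'), fun v => ?_⟩
  by_cases hv : v ∈ B'
  · refine ⟨B', hv, by linarith, ?_⟩
    intro u hu w hadj
    simp [Consistent]
  · set C : Set V := {x | (inducedOn G {x | x ∉ B'}).Reachable v x} with hC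
    have hCfin : C.Finite := Set.toFinite _
    refine ⟨B' ∪ hCfin.toFinset, ?_, ?_, ?_⟩
    · exact Finset.mem_union_right _ (by simpa [hC] using SimpleGraph.Reachable.refl v)
    · have h1 : (B' ∪ hCfin.toFinset).card ≤ B'.card + hCfin.toFinset.card :=
        Finset.card_union_le _ _
      have h2 : hCfin.toFinset.card = C.ncard := (Set.ncard_eq_toFinset_card _ hCfin).symm
      have h3 := hcomp v hv
      have : ((B' ∪ hCfin.toFinset).card : ℝ) ≤ (B'.card : ℝ) + (C.ncard : ℝ) := by
        rw [← h2]; exact_mod_cast h1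
      linarith
    · intro u hu w hadj
      simp only [Finset.mem_union, not_or, Set.Finite.mem_toFinset] at hu ⊢
      obtain ⟨huB, huC⟩ := hu
      constructor
      · intro hr
        have hwB : w ∉ B' := by simpa using hr
        refine ⟨hwB, fun hwC : w ∈ C => huC ?_⟩
        have hadj' : (inducedOn G {x | x ∉ B'}).Adj w u := ⟨hadj.symm, hwB, huB⟩
        exact hwC.trans hadj'.reachable
      · intro ⟨hwB, _⟩
        simpa using hwB
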